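/- If x and z are Artin–Schreier elements of A with xz ≠ zx, then there exists w ∈ A with w ∉ F·1 such that w is either Artin–Schreier or square-central and w commutes with both x and z (wx = xw and wz = zw). -/

import Mathlib

/-- `x` is an Artin–Schreier element: `x² + x ∈ F·1`. -/
def IsArtinSchreier (F : Type*) {A : Type*} [Field F] [Ring A] [Algebra F A] (x : A) : Prop :=
  x ^ 2 + x ∈ Set.range (algebraMap F A)

/-- `y` is a square-central element: `y² ∈ F·1`. -/
def IsSquareCentral (F : Type*) {A : Type*} [Field F] [Ring A] [Algebra F A] (y : A) : Prop :=
  y ^ 2 ∈ Set.range (algebraMap F A)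

/-- `(x, y, z, u)` is a quadruple of generators of the biquaternion algebra `A`. -/
def IsQuadruple (F : Type*) {A : Type*} [Field F] [Ring A] [Algebra F A]
    (q : A × A × A × A) : Prop :=
  match q with
  | (x, y, z, u) =>
    y ≠ 0 ∧ u ≠ 0 ∧
    IsArtinSchreier F x ∧ IsSquareCentral F y ∧
    IsArtinSchreier F z ∧ IsSquareCentral F u ∧
    x * y + y * x = y ∧ x * z = z * x ∧ x * u = u * x ∧
    y * z = z * y ∧ y * u = u * y ∧ z * u + u * z = u


section AuxL2

variable {F A : Type*} [Field F] [CharP F 2] [DivisionRing A] [Algebra F A]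

private lemma aux_L2 (hdim : Module.finrank F A = 16)
    (x c : A) (a μ : F) (hx2 : x*x = x + algebraMap F A a) (hc0 : c ≠ 0)
    (hxc : x*c = c + c*x) (hc2 : c*c = algebraMap F A μ) :
    ∃ w : A, w ∉ Set.range (algebraMap F A) ∧ w*x = x*w ∧ w*c = c*w := by
  haveI : CharP A 2 := charP_of_injective_algebraMap' (A := A) F 2
  haveI : FiniteDimensional F A := FiniteDimensional.of_finrank_pos (by omega)
  have hμ0 : algebraMap F A μ ≠ 0 := hc2 ▸ mul_ne_zero hc0 hc0
  have hxcinv : x * c⁻¹ = c⁻¹ + c⁻¹ * x := by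
    have h1 : c⁻¹ * (x * c) * c⁻¹ = c⁻¹ * (c + c * x) * c⁻¹ := by rw [hxc]
    have h2 : c⁻¹ * (x * c) * c⁻¹ = c⁻¹ * x := by
      rw [← mul_assoc, mul_assoc _ c c⁻¹, mul_inv_cancel₀ hc0, mul_one]
    have h3 : c⁻¹ * (c + c * x) * c⁻¹ = c⁻¹ + x * c⁻¹ := by
      rw [mul_add, inv_mul_cancel₀ hc0, ← mul_assoc, inv_mul_cancel₀ hc0, one_mul, add_mul,
        one_mul]
    rw [h2, h3] at h1
    rw [h1, ← add_assoc, CharTwo.add_self_eq_zero, zero_add]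
  have hxcT : ∀ t : A, x*(c*t) = c*t + c*(x*t) := fun t => by
    rw [← mul_assoc, hxc, add_mul, mul_assoc]
  have hxciT : ∀ t : A, x*(c⁻¹*t) = c⁻¹*t + c⁻¹*(x*t) := fun t => by
    rw [← mul_assoc, hxcinv, add_mul, mul_assoc]
  -- the F-linear map ad_x
  set adx : A →ₗ[F] A := LinearMap.mulLeft F x + LinearMap.mulRight F x with hadx
  have adx_apply : ∀ v, adx v = x*v + v*x := fun v => rfl
  have adx_idem : ∀ v, adx (adx v) = adx v := by
    intro v
    rw [adx_apply, adx_apply, mul_add, add_mul, ← mul_assoc, hx2, mul_assoc v x x, hx2]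
    rw [add_mul, mul_add, Algebra.commutes a v, ← mul_assoc x v x]
    abel_nf
    simp only [CharTwo.two_nsmul, CharTwo.two_zsmul, zero_add, add_zero, smul_zero]
  set S : Submodule F A := LinearMap.ker adx with hS
  -- multiplication by c maps S isomorphically onto range adx
  have hmapS : Submodule.map (LinearMap.mulLeft F c) S = LinearMap.range adx := by
    apply le_antisymm
    · rintro _ ⟨v, hv, rfl⟩
      have hv' : x*v + v*x = 0 := hv
      have : adx (c*v) = c*v := by
        rw [adx_apply, ← mul_assoc, hxc, add_mul, mul_assoc, mul_assoc, add_assoc, ← mul_add,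
          hv', mul_zero, add_zero]
      exact ⟨c*v, this⟩
    · rintro _ ⟨u, rfl⟩
      have hfix : x * adx u + adx u * x = adx u := (adx_apply (adx u)).symm.trans (adx_idem u)
      refine ⟨c⁻¹ * adx u, ?_, ?_⟩
      · show adx (c⁻¹ * adx u) = 0
        rw [adx_apply, ← mul_assoc, hxcinv, add_mul, mul_assoc, mul_assoc, add_assoc, ← mul_add,
          hfix, ← mul_add, CharTwo.add_self_eq_zero, mul_zero]
      · show LinearMap.mulLeft F c (c⁻¹ * adx u) = adx u
        rw [LinearMap.mulLeft_apply, ← mul_assoc, mul_inv_cancel₀ hc0, one_mul]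
  have hrankS : Module.finrank F S = 8 := by
    have h1 := LinearMap.finrank_range_add_finrank_ker adx
    have h2 : Module.finrank F (Submodule.map (LinearMap.mulLeft F c) S) = Module.finrank F S := by
      refine (LinearEquiv.finrank_eq ?_).symm
      exact Submodule.equivMapOfInjective _ (mul_right_injective₀ hc0) S
    rw [hmapS] at h2
    rw [hdim, ← h2] at h1
    omega
  -- the map T v = v + c⁻¹ v c on S
  set T : A →ₗ[F] A :=
    LinearMap.id + (LinearMap.mulRight F c).comp (LinearMap.mulLeft F c⁻¹) with hT
  have T_apply : ∀ v, T v = v + c⁻¹ * v * c := fun v => rfl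
  have hTS : ∀ v ∈ S, T v ∈ S := by
    intro v hv
    have hv' : x*v + v*x = 0 := hv
    have hxv : x*v = v*x := by rwa [add_eq_zero_iff_eq_neg, CharTwo.neg_eq] at hv'
    have hxvT : ∀ t : A, x*(v*t) = v*(x*t) := fun t => by rw [← mul_assoc, hxv, mul_assoc]
    show adx (T v) = 0
    have h0 : adx v = 0 := hv
    rw [T_apply, map_add, h0, zero_add, adx_apply]
    simp only [mul_assoc, hxciT, hxvT, hxcT, hxc, mul_add, add_mul]
    abel_nf
    try simp only [CharTwo.two_nsmul, CharTwo.two_zsmul, zero_add, add_zero, smul_zero]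
    try abel
  have hconj : ∀ t : A, c⁻¹ * (c⁻¹ * t * c) * c = t := by
    intro t
    simp only [mul_assoc]
    rw [hc2, ← Algebra.commutes μ t, ← mul_assoc c⁻¹ c⁻¹, ← mul_inv_rev, hc2, ← mul_assoc,
      inv_mul_cancel₀ hμ0, one_mul]
  set T' : S →ₗ[F] S := T.restrict hTS with hT'
  have hT'sq : ∀ v : S, T' (T' v) = 0 := by
    intro v
    apply Subtype.ext
    have hcoe : ∀ u : S, (T' u : A) = T u := fun u => rfl
    rw [hcoe, hcoe]
    show T (T v) = (0 : A)
    rw [T_apply, T_apply]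
    rw [mul_add, add_mul, hconj]
    abel_nf
    try simp only [CharTwo.two_nsmul, CharTwo.two_zsmul, zero_add, add_zero, smul_zero]
    try abel
  have hker4 : 4 ≤ Module.finrank F (LinearMap.ker T') := by
    have hcomp : T' ∘ₗ T' = 0 := LinearMap.ext fun v => hT'sq v
    have hle : LinearMap.range T' ≤ LinearMap.ker T' := LinearMap.range_le_ker_iff.mpr hcomp
    have h1 := LinearMap.finrank_range_add_finrank_ker T'
    have h2 : Module.finrank F (LinearMap.range T') ≤ Module.finrank F (LinearMap.ker T') :=
      Submodule.finrank_mono hle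
    rw [hrankS] at h1
    omega
  -- extract an element outside the scalars
  have hnotle : ¬ (Submodule.map S.subtype (LinearMap.ker T') ≤
      LinearMap.range (Algebra.linearMap F A)) := by
    intro hle2
    have e1 : Module.finrank F (Submodule.map S.subtype (LinearMap.ker T'))
        = Module.finrank F (LinearMap.ker T') :=
      (LinearEquiv.finrank_eq
        (Submodule.equivMapOfInjective _ (Submodule.injective_subtype S) _)).symm
    have e2 : Module.finrank F (LinearMap.range (Algebra.linearMap F A)) ≤ 1 := by
      have := LinearMap.finrank_range_le (Algebra.linearMap F A)
      simpa using this
    have e3 := Submodule.finrank_mono (t := LinearMap.range (Algebra.linearMap F A)) hle2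
    omega
  rw [SetLike.not_le_iff_exists] at hnotle
  obtain ⟨w, hwmem, hwnot⟩ := hnotle
  obtain ⟨w', hw'ker, rfl⟩ := hwmem
  have hwS : (w' : A) ∈ S := w'.2
  have hadx0 : x * (w' : A) + (w' : A) * x = 0 := hwS
  have hcomm1 : (w' : A) * x = x * (w' : A) := by
    rw [add_eq_zero_iff_eq_neg, CharTwo.neg_eq] at hadx0
    exact hadx0.symm
  have hT0 : T (w' : A) = 0 := by
    have h0 : T' w' = 0 := hw'ker
    calc T (w' : A) = (T' w' : A) := rfl
    _ = ((0 : S) : A) := by rw [h0]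
    _ = 0 := rfl
  have hfix2 : c⁻¹ * (w' : A) * c = (w' : A) := by
    rw [T_apply] at hT0
    rw [add_eq_zero_iff_eq_neg, CharTwo.neg_eq] at hT0
    exact hT0.symm
  have hcomm2 : (w' : A) * c = c * (w' : A) := by
    conv_rhs => rw [← hfix2]
    rw [← mul_assoc, ← mul_assoc, mul_inv_cancel₀ hc0, one_mul]
  refine ⟨(w' : A), ?_, hcomm1, hcomm2⟩
  intro hmem
  apply hwnot
  obtain ⟨f, hf⟩ := hmem
  exact ⟨f, by simpa using hf⟩

end AuxL2


section AuxL1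

variable {F A : Type*} [Field F] [CharP F 2] [DivisionRing A] [Algebra F A]

set_option maxHeartbeats 1600000 in
private lemma aux_L1 (hcentral : Subalgebra.center F A = ⊥)
    (hdim : Module.finrank F A = 16)
    (x z w : A) (a : F) (hx2 : x*x = x + algebraMap F A a)
    (hne : x * z ≠ z * x) (hwx : w*x = x*w) (hwz : w*z = z*w) :
    ∃ α β : F, w*w = algebraMap F A α + β • w := by
  haveI : CharP A 2 := charP_of_injective_algebraMap' (A := A) F 2
  haveI : FiniteDimensional F A := FiniteDimensional.of_finrank_pos (by omega)
  have hadd : ∀ u v : A, u + v = 0 → u = v := by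
    intro u v h; rwa [add_eq_zero_iff_eq_neg, CharTwo.neg_eq] at h
  by_cases hind : LinearIndependent F ![1, w, w*w]
  swap
  · -- dependent: read off a quadratic relation
    rw [Fintype.not_linearIndependent_iff] at hind
    obtain ⟨g, hg, i, hgi⟩ := hind
    simp only [Fin.sum_univ_three, Matrix.cons_val_zero, Matrix.cons_val_one, Matrix.head_cons,
      Matrix.cons_val_two, Matrix.tail_cons] at hg
    rcases eq_or_ne (g 2) 0 with h2 | h2
    · rcases eq_or_ne (g 1) 0 with h1 | h1
      · exfalso
        rw [h1, h2] at hg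
        simp only [zero_smul, add_zero, smul_eq_zero] at hg
        rcases hg with hg | hg
        · fin_cases i <;> simp_all
        · exact one_ne_zero hg
      · -- w is a scalar
        have hw : w = ((g 1)⁻¹ * g 0) • 1 := by
          rw [h2, zero_smul, add_zero] at hg
          have : g 1 • w = g 0 • (1 : A) := hadd _ _ (by rw [add_comm] at hg; exact hg)
          calc w = (g 1)⁻¹ • (g 1 • w) := by rw [inv_smul_smul₀ h1]
          _ = (g 1)⁻¹ • (g 0 • (1:A)) := by rw [this]
          _ = ((g 1)⁻¹ * g 0) • 1 := by rw [smul_smul]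
        refine ⟨((g 1)⁻¹ * g 0)^2, 0, ?_⟩
        rw [hw, zero_smul, add_zero, smul_mul_smul_comm, one_mul, Algebra.algebraMap_eq_smul_one,
          pow_two]
    · refine ⟨(g 2)⁻¹ * g 0, (g 2)⁻¹ * g 1, ?_⟩
      have h3 : g 2 • (w*w) = g 0 • (1:A) + g 1 • w := by
        apply hadd
        rw [← hg]; abel
      calc w*w = (g 2)⁻¹ • (g 2 • (w*w)) := by rw [inv_smul_smul₀ h2]
      _ = (g 2)⁻¹ • (g 0 • (1:A) + g 1 • w) := by rw [h3]
      _ = algebraMap F A ((g 2)⁻¹ * g 0) + ((g 2)⁻¹ * g 1) • w := by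
          rw [smul_add, smul_smul, smul_smul, Algebra.algebraMap_eq_smul_one]
  · exfalso
    -- E = F[w]
    set E := Algebra.adjoin F {w} with hE
    have hwE : w ∈ E := Algebra.self_mem_adjoin_singleton F w
    have hPE : ∀ v ∈ E, v * x = x * v ∧ v * z = z * v := by
      intro v hv
      induction hv using Algebra.adjoin_induction with
      | mem u hu =>
          rcases Set.mem_singleton_iff.mp hu with rfl
          exact ⟨hwx, hwz⟩
      | algebraMap r => exact ⟨(Algebra.commutes r x), (Algebra.commutes r z)⟩
      | add u v hu hv hu' hv' => exact ⟨by rw [add_mul, mul_add, hu'.1, hv'.1],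
          by rw [add_mul, mul_add, hu'.2, hv'.2]⟩
      | mul u v hu hv hu' hv' => exact ⟨by rw [mul_assoc, hv'.1, ← mul_assoc, hu'.1, mul_assoc],
          by rw [mul_assoc, hv'.2, ← mul_assoc, hu'.2, mul_assoc]⟩
    have hEw : ∀ v ∈ E, v * w = w * v := by
      intro v hv
      induction hv using Algebra.adjoin_induction with
      | mem u hu => rw [Set.mem_singleton_iff.mp hu]
      | algebraMap r => exact Algebra.commutes r w
      | add p q hp hq hp' hq' => rw [add_mul, mul_add, hp', hq']
      | mul p q hp hq hp' hq' => rw [mul_assoc, hq', ← mul_assoc, hp', mul_assoc]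
    have hEE : ∀ u ∈ E, ∀ v ∈ E, u * v = v * u := by
      intro u hu v hv
      induction hv using Algebra.adjoin_induction with
      | mem s hs => rw [Set.mem_singleton_iff.mp hs]; exact hEw u hu
      | algebraMap r => exact (Algebra.commutes r u).symm
      | add p q hp hq hp' hq' => rw [add_mul, mul_add, hp', hq']
      | mul p q hp hq hp' hq' => rw [← mul_assoc, hp', mul_assoc, hq', ← mul_assoc]
    -- E is a field
    have hinvmem : ∀ v : A, v ∈ E → v⁻¹ ∈ E := by
      intro v hv
      rcases eq_or_ne v 0 with rfl | hv0
      · rw [inv_zero]; exact zero_mem E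
      · have hint : IsIntegral F v := Algebra.IsIntegral.isIntegral v
        have hc0' : (minpoly F v).coeff 0 ≠ 0 := minpoly.coeff_zero_ne_zero hint hv0
        have hvq : v * Polynomial.aeval v (minpoly F v).divX
            = algebraMap F A (-(minpoly F v).coeff 0) := by
          have hs := congrArg (Polynomial.aeval v) (Polynomial.X_mul_divX_add (minpoly F v))
          rw [map_add, map_mul, Polynomial.aeval_X, Polynomial.aeval_C, minpoly.aeval] at hs
          rw [map_neg, eq_comm, neg_eq_iff_add_eq_zero, add_comm]
          exact hs
        have hqE : Polynomial.aeval v (minpoly F v).divX ∈ E := by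
          have h1 : Algebra.adjoin F {v} ≤ E := Algebra.adjoin_le (by simpa using hv)
          exact h1 (Polynomial.aeval_mem_adjoin_singleton F v)
        have hinv : v⁻¹ = (-(minpoly F v).coeff 0)⁻¹ • Polynomial.aeval v (minpoly F v).divX := by
          apply inv_eq_of_mul_eq_one_right
          rw [mul_smul_comm, hvq, Algebra.smul_def, ← map_mul,
            inv_mul_cancel₀ (neg_ne_zero.mpr hc0'), map_one]
        rw [hinv]
        exact E.smul_mem hqE _
    letI : Field ↥E := by
      refine IsField.toField ⟨⟨0, 1, ?_⟩, ?_, ?_⟩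
      · intro h
        exact zero_ne_one (congrArg Subtype.val h)
      · intro u v
        exact Subtype.ext (hEE u u.2 v v.2)
      · intro u hu
        refine ⟨⟨(u : A)⁻¹, hinvmem _ u.2⟩, ?_⟩
        apply Subtype.ext
        have : (u : A) ≠ 0 := fun h => hu (Subtype.ext h)
        exact mul_inv_cancel₀ this
    -- commuting toolbox
    have Pmul : ∀ u v : A, (u*x = x*u ∧ u*z = z*u) → (v*x = x*v ∧ v*z = z*v) →
        ((u*v)*x = x*(u*v) ∧ (u*v)*z = z*(u*v)) := fun u v hu hv =>
      ⟨by rw [mul_assoc, hv.1, ← mul_assoc, hu.1, mul_assoc],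
       by rw [mul_assoc, hv.2, ← mul_assoc, hu.2, mul_assoc]⟩
    have Padd : ∀ u v : A, (u*x = x*u ∧ u*z = z*u) → (v*x = x*v ∧ v*z = z*v) →
        ((u+v)*x = x*(u+v) ∧ (u+v)*z = z*(u+v)) := fun u v hu hv =>
      ⟨by rw [add_mul, mul_add, hu.1, hv.1], by rw [add_mul, mul_add, hu.2, hv.2]⟩
    have Psc : ∀ r : F, ((algebraMap F A r)*x = x*(algebraMap F A r) ∧
        (algebraMap F A r)*z = z*(algebraMap F A r)) := fun r =>
      ⟨Algebra.commutes r x, Algebra.commutes r z⟩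
    have Pinv : ∀ v : A, (v*x = x*v ∧ v*z = z*v) →
        (v⁻¹*x = x*v⁻¹ ∧ v⁻¹*z = z*v⁻¹) := by
      intro v hv
      constructor
      · exact Commute.inv_left₀ (a := v) (b := x) hv.1
      · exact Commute.inv_left₀ (a := v) (b := z) hv.2
    have step2 : ∀ f₀ f₁ : A, (f₀*x = x*f₀ ∧ f₀*z = z*f₀) → (f₁*x = x*f₁ ∧ f₁*z = z*f₁) →
        f₀ + f₁ * x = 0 → f₀ = 0 ∧ f₁ = 0 := by
      intro f₀ f₁ hP0 hP1 heq
      rcases eq_or_ne f₁ 0 with rfl | h1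
      · rw [zero_mul, add_zero] at heq; exact ⟨heq, rfl⟩
      · exfalso
        have hx' : x = f₁⁻¹ * f₀ := by
          have h2 : f₀ = f₁ * x := hadd _ _ heq
          rw [h2, ← mul_assoc, inv_mul_cancel₀ h1, one_mul]
        have hPinv := Pinv f₁ hP1
        apply hne
        calc x*z = f₁⁻¹ * f₀ * z := by rw [← hx']
        _ = f₁⁻¹ * (z * f₀) := by rw [mul_assoc, hP0.2]
        _ = z * (f₁⁻¹ * f₀) := by rw [← mul_assoc, hPinv.2, mul_assoc]
        _ = z * x := by rw [← hx']
    have step3 : ∀ f₀ f₁ f₂ : A, (f₀*x = x*f₀ ∧ f₀*z = z*f₀) → (f₁*x = x*f₁ ∧ f₁*z = z*f₁) →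
        (f₂*x = x*f₂ ∧ f₂*z = z*f₂) →
        f₀ + f₁ * x + f₂ * z = 0 → f₀ = 0 ∧ f₁ = 0 ∧ f₂ = 0 := by
      intro f₀ f₁ f₂ hP0 hP1 hP2 heq
      rcases eq_or_ne f₂ 0 with rfl | h2
      · rw [zero_mul, add_zero] at heq
        obtain ⟨e0, e1⟩ := step2 _ _ hP0 hP1 heq
        exact ⟨e0, e1, rfl⟩
      · exfalso
        have hPinv := Pinv f₂ hP2
        have hg0 := Pmul _ _ hPinv hP0
        have hg1 := Pmul _ _ hPinv hP1
        have h3 : f₀ + f₁ * x = f₂ * z := hadd _ _ heq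
        have hz' : z = f₂⁻¹*f₀ + (f₂⁻¹*f₁)*x := by
          calc z = f₂⁻¹ * (f₂ * z) := by rw [← mul_assoc, inv_mul_cancel₀ h2, one_mul]
          _ = f₂⁻¹ * (f₀ + f₁ * x) := by rw [← h3]
          _ = f₂⁻¹*f₀ + (f₂⁻¹*f₁)*x := by rw [mul_add, mul_assoc]
        apply hne
        calc x*z = x*(f₂⁻¹*f₀) + x*((f₂⁻¹*f₁)*x) := by rw [hz', mul_add]
        _ = (f₂⁻¹*f₀)*x + ((f₂⁻¹*f₁)*x)*x := by
            rw [← hg0.1, ← mul_assoc x (f₂⁻¹*f₁) x, ← hg1.1]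
        _ = (f₂⁻¹*f₀ + (f₂⁻¹*f₁)*x)*x := by rw [add_mul]
        _ = z * x := by rw [← hz']
    have step3x : ∀ f₀ f₁ f₂ : A, (f₀*x = x*f₀ ∧ f₀*z = z*f₀) → (f₁*x = x*f₁ ∧ f₁*z = z*f₁) →
        (f₂*x = x*f₂ ∧ f₂*z = z*f₂) → x*z = f₀ + f₁*x + f₂*z → False := by
      intro f₀ f₁ f₂ hP0 hP1 hP2 hf
      have h3 : x*(f₀ + f₁*x + f₂*z) = (f₀ + f₁*x + f₂*z) + algebraMap F A a * z := by
        rw [← hf, ← mul_assoc, hx2, add_mul]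
      have h5 : x*(f₀ + f₁*x + f₂*z) + ((f₀ + f₁*x + f₂*z) + algebraMap F A a * z) = 0 := by
        rw [h3]; exact CharTwo.add_self_eq_zero _
      have h4 : (f₁*(algebraMap F A a) + f₂*f₀ + f₀) + (f₀ + f₂*f₁)*x
          + (f₂*f₂ + f₂ + algebraMap F A a)*z = 0 := by
        rw [← h5]
        have m0 : ∀ t : A, x*(f₀*t) = f₀*(x*t) := fun t => by
          rw [← mul_assoc, ← hP0.1, mul_assoc]
        have m1 : ∀ t : A, x*(f₁*t) = f₁*(x*t) := fun t => by
          rw [← mul_assoc, ← hP1.1, mul_assoc]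
        have m2 : ∀ t : A, x*(f₂*t) = f₂*(x*t) := fun t => by
          rw [← mul_assoc, ← hP2.1, mul_assoc]
        simp only [mul_add, add_mul, mul_assoc, m0, m1, m2, hf, hx2, ← hP0.1, ← hP1.1, ← hP2.1]
        abel_nf
        try simp only [CharTwo.two_nsmul, CharTwo.two_zsmul, zero_add, add_zero, smul_zero]
        try abel
      obtain ⟨-, -, hu2⟩ := step3 _ _ _
        (Padd _ _ (Padd _ _ (Pmul _ _ hP1 (Psc a)) (Pmul _ _ hP2 hP0)) hP0)
        (Padd _ _ hP0 (Pmul _ _ hP2 hP1))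
        (Padd _ _ (Padd _ _ (Pmul _ _ hP2 hP2) hP2) (Psc a))
        h4
      have hq : f₂*f₂ = f₂ + algebraMap F A a := by
        rw [add_assoc] at hu2
        exact hadd _ _ hu2
      have h6 : (x + f₂) * (x + f₂) = x + f₂ := by
        rw [mul_add, add_mul, add_mul, hx2, hq, ← hP2.1]
        abel_nf
        try simp only [CharTwo.two_nsmul, CharTwo.two_zsmul, zero_add, add_zero, smul_zero]
        try abel
      have h7 : (x + f₂) * ((x + f₂) - 1) = 0 := by rw [mul_sub, h6, mul_one, sub_self]
      rcases mul_eq_zero.mp h7 with h8 | h8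
      · have hx' : x = f₂ := hadd x f₂ h8
        exact hne (by rw [hx', hP2.2])
      · have h9 : x + f₂ = 1 := by rwa [sub_eq_zero] at h8
        have hx' : x = 1 + f₂ := by
          rw [← h9, add_assoc, CharTwo.add_self_eq_zero, add_zero]
        exact hne (by rw [hx', add_mul, mul_add, one_mul, mul_one, hP2.2])
    -- linear independence of 1, x, z, xz over E
    have hindE : LinearIndependent ↥E ![(1:A), x, z, x*z] := by
      rw [Fintype.linearIndependent_iff]
      intro g hg
      have P0 := hPE _ (g 0).2
      have P1 := hPE _ (g 1).2
      have P2 := hPE _ (g 2).2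
      have P3 := hPE _ (g 3).2
      have hsum : ((g 0 : A)) + ((g 1 : A)) * x + ((g 2 : A)) * z
          + ((g 3 : A)) * (x*z) = 0 := by
        have := hg
        simp only [Fin.sum_univ_four, Matrix.cons_val_zero, Matrix.cons_val_one,
          Matrix.head_cons, Matrix.cons_val_two, Matrix.tail_cons, Matrix.cons_val_three,
          Subalgebra.smul_def, smul_eq_mul] at this
        rw [← this, mul_one]
      have hg3 : (g 3 : A) = 0 := by
        by_contra h3
        have hPinv := Pinv _ P3
        have hf : x*z = ((g 3: A)⁻¹*(g 0)) + ((g 3:A)⁻¹*(g 1))*x + ((g 3:A)⁻¹*(g 2))*z := by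
          have h6 : ((g 0 : A)) + ((g 1 : A)) * x + ((g 2 : A)) * z = (g 3 : A) * (x*z) :=
            hadd _ _ hsum
          calc x*z = (g 3 : A)⁻¹ * ((g 3 : A) * (x*z)) := by
                rw [← mul_assoc, inv_mul_cancel₀ h3, one_mul]
          _ = (g 3 : A)⁻¹ * (((g 0 : A)) + ((g 1 : A)) * x + ((g 2 : A)) * z) := by rw [← h6]
          _ = ((g 3: A)⁻¹*(g 0)) + ((g 3:A)⁻¹*(g 1))*x + ((g 3:A)⁻¹*(g 2))*z := by
                rw [mul_add, mul_add, mul_assoc, mul_assoc]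
        exact step3x _ _ _ (Pmul _ _ hPinv P0) (Pmul _ _ hPinv P1) (Pmul _ _ hPinv P2) hf
      have hsum' : ((g 0 : A)) + ((g 1 : A)) * x + ((g 2 : A)) * z = 0 := by
        rw [hg3, zero_mul, add_zero] at hsum
        exact hsum
      obtain ⟨e0, e1, e2⟩ := step3 _ _ _ P0 P1 P2 hsum'
      intro i
      fin_cases i
      · exact Subtype.ext e0
      · exact Subtype.ext e1
      · exact Subtype.ext e2
      · exact Subtype.ext hg3
    -- dimension bookkeeping
    haveI : Module.Finite ↥E A := Module.Finite.of_restrictScalars_finite F ↥E A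
    have hm3 : 3 ≤ Module.finrank F ↥E := by
      have hvE : LinearIndependent F
          ![(⟨1, one_mem E⟩ : ↥E), ⟨w, hwE⟩, ⟨w*w, mul_mem hwE hwE⟩] := by
        rw [Fintype.linearIndependent_iff]
        intro g hg
        refine Fintype.linearIndependent_iff.mp hind g ?_
        have := congrArg (Subtype.val) hg
        simpa only [Fin.sum_univ_three, Matrix.cons_val_zero, Matrix.cons_val_one,
          Matrix.head_cons, Matrix.cons_val_two, Matrix.tail_cons, Subalgebra.coe_add, SetLike.val_smul, ZeroMemClass.coe_zero] using this
      have := hvE.fintype_card_le_finrank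
      simpa using this
    have hk4 : 4 ≤ Module.finrank ↥E A := by
      have := hindE.fintype_card_le_finrank
      simpa using this
    have hmul := Module.finrank_mul_finrank F ↥E A
    rw [hdim] at hmul
    have hle4 : Module.finrank F ↥E * 4 ≤ 16 := by
      calc Module.finrank F ↥E * 4 ≤ Module.finrank F ↥E * Module.finrank ↥E A :=
        Nat.mul_le_mul_left _ hk4
      _ = 16 := hmul
    have hm4 : Module.finrank F ↥E = 4 := by
      have h34 : Module.finrank F ↥E = 3 ∨ Module.finrank F ↥E = 4 := by omega
      rcases h34 with h3 | h4
      · rw [h3] at hmul; omega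
      · exact h4
    have hk4' : Module.finrank ↥E A = 4 := by
      rw [hm4] at hmul; omega
    -- so 1, x, z, xz is a basis, hence E is central
    have hcard : Fintype.card (Fin 4) = Module.finrank ↥E A := by
      rw [hk4']; simp
    have hspan := hindE.span_eq_top_of_card_eq_finrank hcard
    have hEcent : ∀ e ∈ E, ∀ v : A, e * v = v * e := by
      intro e he v
      have hv : v ∈ Submodule.span ↥E (Set.range ![(1:A), x, z, x*z]) := by
        rw [hspan]; trivial
      induction hv using Submodule.span_induction with
      | mem u hu =>
          obtain ⟨i, rfl⟩ := hu
          fin_cases i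
          · show e * (1:A) = 1 * e
            rw [mul_one, one_mul]
          · show e * x = x * e
            exact (hPE e he).1
          · show e * z = z * e
            exact (hPE e he).2
          · show e * (x*z) = (x*z) * e
            rw [← mul_assoc, (hPE e he).1, mul_assoc, (hPE e he).2, ← mul_assoc]
      | zero => rw [mul_zero, zero_mul]
      | add p q hp hq hp' hq' => rw [mul_add, add_mul, hp', hq']
      | smul gc p hp hp' =>
          rw [Subalgebra.smul_def, smul_eq_mul, ← mul_assoc, hEE e he _ (gc).2, mul_assoc, hp',
            ← mul_assoc]
    have hwcent : w ∈ Subalgebra.center F A :=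
      Subalgebra.mem_center_iff.mpr (fun b => (hEcent w hwE b).symm)
    rw [hcentral, Algebra.mem_bot] at hwcent
    obtain ⟨f, hf⟩ := hwcent
    have hcontra := Fintype.linearIndependent_iff.mp hind ![f, 1, 0] ?_ 1
    · simpa using hcontra
    · simp only [Fin.sum_univ_three, Matrix.cons_val_zero, Matrix.cons_val_one, Matrix.head_cons,
        Matrix.cons_val_two, Matrix.tail_cons, one_smul, zero_smul, add_zero]
      rw [← hf, Algebra.algebraMap_eq_smul_one]
      exact CharTwo.add_self_eq_zero _

end AuxL1

section AuxMain

variable {F A : Type*} [Field F] [CharP F 2] [DivisionRing A] [Algebra F A]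

private lemma aux_L3 (w x z : A) (hwR : w ∉ Set.range (algebraMap F A))
    (hwx : w*x = x*w) (hwz : w*z = z*w)
    (α β : F) (hq : w*w = algebraMap F A α + β • w) :
    ∃ w' : A, w' ∉ Set.range (algebraMap F A) ∧
      (IsArtinSchreier F w' ∨ IsSquareCentral F w') ∧ w'*x = x*w' ∧ w'*z = z*w' := by
  haveI : CharP A 2 := charP_of_injective_algebraMap' (A := A) F 2
  rcases eq_or_ne β 0 with rfl | hβ
  · refine ⟨w, hwR, Or.inr ⟨α, ?_⟩, hwx, hwz⟩
    rw [pow_two, hq, zero_smul, add_zero]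
  · refine ⟨β⁻¹ • w, ?_, Or.inl ⟨β⁻¹*β⁻¹*α, ?_⟩, ?_, ?_⟩
    · intro ⟨f, hf⟩
      apply hwR
      refine ⟨β * f, ?_⟩
      rw [map_mul, hf, ← Algebra.smul_def, smul_smul, mul_inv_cancel₀ hβ, one_smul]
    · rw [pow_two, smul_mul_smul_comm, hq, smul_add, smul_smul]
      have hββ : β⁻¹ * β⁻¹ * β = β⁻¹ := by field_simp
      rw [hββ, add_assoc, CharTwo.add_self_eq_zero, add_zero, Algebra.smul_def, ← map_mul]
    · rw [smul_mul_assoc, hwx, mul_smul_comm]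
    · rw [smul_mul_assoc, hwz, mul_smul_comm]

end AuxMain


set_option maxHeartbeats 1600000 in
/-- If `x` and `z` are non-commuting Artin–Schreier elements of a biquaternion division
algebra `A`, then there exists `w ∉ F·1`, either Artin–Schreier or square-central, that
commutes with both `x` and `z`. -/
theorem exists_commuting_of_artinSchreier (F A : Type*) [Field F] [CharP F 2]
    [DivisionRing A] [Algebra F A]
    (hcentral : Subalgebra.center F A = ⊥) (hdim : Module.finrank F A = 16)
    (hbiquat : ∃ q : A × A × A × A, IsQuadruple F q)
    (x z : A) (hx : IsArtinSchreier F x) (hz : IsArtinSchreier F z)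
    (hne : x * z ≠ z * x) :
    ∃ w : A, w ∉ Set.range (algebraMap F A) ∧
      (IsArtinSchreier F w ∨ IsSquareCentral F w) ∧
      w * x = x * w ∧ w * z = z * w := by
  haveI : CharP A 2 := charP_of_injective_algebraMap' (A := A) F 2
  have hadd : ∀ u v : A, u + v = 0 → u = v := by
    intro u v h; rwa [add_eq_zero_iff_eq_neg, CharTwo.neg_eq] at h
  obtain ⟨a, ha⟩ := hx
  obtain ⟨γ, hγ⟩ := hz
  have hx2 : x*x = x + algebraMap F A a := by
    rw [← pow_two]
    calc x^2 = x^2 + (x + x) := by rw [CharTwo.add_self_eq_zero, add_zero]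
    _ = (x^2 + x) + x := by rw [← add_assoc]
    _ = x + algebraMap F A a := by rw [ha, add_comm]
  have hz2 : z*z = z + algebraMap F A γ := by
    rw [← pow_two]
    calc z^2 = z^2 + (z + z) := by rw [CharTwo.add_self_eq_zero, add_zero]
    _ = (z^2 + z) + z := by rw [← add_assoc]
    _ = z + algebraMap F A γ := by rw [hγ, add_comm]
  have e1 : x*(x*z) = x*z + algebraMap F A a * z := by rw [← mul_assoc, hx2, add_mul]
  have e2 : z*(x*x) = z*x + z * algebraMap F A a := by rw [hx2, mul_add]
  have e3 : z*(z*x) = z*x + algebraMap F A γ * x := by rw [← mul_assoc, hz2, add_mul]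
  have e4 : x*(z*z) = x*z + x * algebraMap F A γ := by rw [hz2, mul_add]
  set c : A := x*z + z*x with hc
  have hc0 : c ≠ 0 := fun h => hne (hadd _ _ h)
  have hxc : x*c = c + c*x := by
    rw [hc]
    simp only [mul_add, add_mul, mul_assoc, e1, e2, ← Algebra.commutes a z]
    abel_nf
    try simp only [CharTwo.two_nsmul, CharTwo.two_zsmul, zero_add, add_zero, smul_zero]
    try abel
  have hzc : z*c = c + c*z := by
    rw [hc]
    simp only [mul_add, add_mul, mul_assoc, e3, e4, ← Algebra.commutes γ x]
    abel_nf
    try simp only [CharTwo.two_nsmul, CharTwo.two_zsmul, zero_add, add_zero, smul_zero]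
    try abel
  set p : A := x + z + c with hp
  have hpx : p*x = x*p := by
    apply hadd
    rw [hp, hc]
    simp only [mul_add, add_mul, mul_assoc, e1, e2, ← Algebra.commutes a z]
    abel_nf
    try simp only [CharTwo.two_nsmul, CharTwo.two_zsmul, zero_add, add_zero, smul_zero]
    try abel
  have hpz : p*z = z*p := by
    apply hadd
    rw [hp, hc]
    simp only [mul_add, add_mul, mul_assoc, e3, e4, ← Algebra.commutes γ x]
    abel_nf
    try simp only [CharTwo.two_nsmul, CharTwo.two_zsmul, zero_add, add_zero, smul_zero]
    try abel
  by_cases hpR : p ∈ Set.range (algebraMap F A)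
  · obtain ⟨f, hf⟩ := hpR
    have hceq : c = algebraMap F A f + x + z := by
      rw [hf, hp]
      abel_nf
      try simp only [CharTwo.two_nsmul, CharTwo.two_zsmul, zero_add, add_zero, smul_zero]
      try abel
    have hxz : x*z = (algebraMap F A f + x + z) + z*x := by
      rw [← hceq, hc, add_assoc, CharTwo.add_self_eq_zero, add_zero]
    have hc2 : c*c = algebraMap F A (f*f + a + γ + f) := by
      calc c*c = (algebraMap F A f + x + z) * (algebraMap F A f + x + z) := by rw [← hceq]
      _ = algebraMap F A (f*f + a + γ + f) := by
          rw [map_add, map_add, map_add, map_mul]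
          simp only [mul_add, add_mul, mul_assoc, hx2, hz2, hxz, Algebra.commutes,
            ← map_mul]
          abel_nf
          try simp only [CharTwo.two_nsmul, CharTwo.two_zsmul, zero_add, add_zero, smul_zero]
          try abel
    obtain ⟨w, hwR, hwx, hwc⟩ := aux_L2 hdim x c a (f*f+a+γ+f) hx2 hc0 hxc hc2
    have hzeq : z = algebraMap F A f + x + c := by
      rw [hf, hp]
      abel_nf
      try simp only [CharTwo.two_nsmul, CharTwo.two_zsmul, zero_add, add_zero, smul_zero]
      try abel
    have hwz : w*z = z*w := by
      rw [hzeq]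
      simp only [mul_add, add_mul, hwx, hwc, ← Algebra.commutes f w]
    obtain ⟨α, β, hq⟩ := aux_L1 hcentral hdim x z w a hx2 hne hwx hwz
    exact aux_L3 w x z hwR hwx hwz α β hq
  · obtain ⟨α, β, hq⟩ := aux_L1 hcentral hdim x z p a hx2 hne hpx hpz
    exact aux_L3 p x z hpR hpx hpz α β hq
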